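/- Let 0 < A < 1/2 and q(z) = e^{iz} + A e^{2iz}. Then (i) for every real s, |e^{is} + 1/A| ≥ 1/A − 1, with equality when s = π; and (ii) if t ∈ ℂ with Re t ∈ [−π, π) and |Im t| < log(1/A − 1), and s ∈ [−π, π) is real, then q(t) = q(s) implies t = s. -/

import Mathlib

open Complex Real

/-- For the limaçon parametrization `q(z) = e^{iz} + A e^{2iz}` with `0 < A < 1/2`:
(i) `|e^{is} + 1/A| ≥ 1/A - 1` for all real `s`, with equality at `s = π`;
(ii) the injectivity condition (G) holds on the strip `|Im z| < log(1/A - 1)`. -/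
theorem limacon_param_grauert (A : ℝ) (hA₀ : 0 < A) (hA₁ : A < 1 / 2) :
    (∀ s : ℝ, 1 / A - 1 ≤ ‖Complex.exp (Complex.I * s) + 1 / (A : ℂ)‖)
    ∧ (‖Complex.exp (Complex.I * (π : ℝ)) + 1 / (A : ℂ)‖ = 1 / A - 1)
    ∧ (∀ t : ℂ, -π ≤ t.re → t.re < π → |t.im| < Real.log (1 / A - 1) →
        ∀ s : ℝ, -π ≤ s → s < π →
          Complex.exp (Complex.I * t) + (A : ℂ) * Complex.exp (2 * Complex.I * t)
            = Complex.exp (Complex.I * s) + (A : ℂ) * Complex.exp (2 * Complex.I * s) →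
          t = (s : ℂ)) := by
  have hA2 : 2 < 1 / A := by rw [lt_div_iff₀ hA₀]; linarith
  have h1A : (1:ℝ) < 1 / A - 1 := by linarith
  have habsA : ‖1 / (A : ℂ)‖ = 1 / A := by
    rw [norm_div, Complex.norm_real, Real.norm_eq_abs, norm_one, abs_of_pos hA₀]
  have habsexp : ∀ s : ℝ, ‖Complex.exp (Complex.I * s)‖ = 1 := by
    intro s
    rw [Complex.norm_exp]
    simp
  refine ⟨?_, ?_, ?_⟩
  · intro s
    have htri := norm_add_le (Complex.exp (Complex.I * s) + 1 / (A:ℂ))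
      (-Complex.exp (Complex.I * s))
    rw [add_neg_cancel_comm] at htri
    rw [habsA, norm_neg, habsexp] at htri
    linarith
  · rw [mul_comm, Complex.exp_pi_mul_I]
    have : (-1 : ℂ) + 1 / (A:ℂ) = ((1/A - 1 : ℝ) : ℂ) := by push_cast; ring
    rw [this, Complex.norm_real, Real.norm_eq_abs, abs_of_pos (by linarith)]
  · intro t ht₁ ht₂ ht₃ s hs₁ hs₂ hq
    set a := Complex.exp (Complex.I * t) with ha
    set b := Complex.exp (Complex.I * (s:ℂ)) with hb
    have hat : Complex.exp (2 * Complex.I * t) = a ^ 2 := by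
      rw [ha, ← Complex.exp_nat_mul]; ring_nf
    have hbt : Complex.exp (2 * Complex.I * (s:ℂ)) = b ^ 2 := by
      rw [hb, ← Complex.exp_nat_mul]; ring_nf
    rw [hat, hbt] at hq
    have hfac : (a - b) * (1 + (A:ℂ) * (a + b)) = 0 := by linear_combination hq
    have habsa : ‖a‖ < 1 / A - 1 := by
      rw [ha, Complex.norm_exp]
      have : (Complex.I * t).re = -t.im := by simp
      rw [this]
      calc Real.exp (-t.im) ≤ Real.exp |t.im| := Real.exp_le_exp.2 (neg_le_abs _)
        _ < Real.exp (Real.log (1/A - 1)) := Real.exp_lt_exp.2 ht₃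
        _ = 1/A - 1 := Real.exp_log (by linarith)
    have hne : 1 + (A:ℂ) * (a + b) ≠ 0 := by
      intro h
      have h' : (A:ℂ) * (a + b) = -1 := by linear_combination h
      have habs : A * ‖a + b‖ = 1 := by
        have := congrArg (‖·‖) h'
        rwa [norm_mul, Complex.norm_real, Real.norm_eq_abs, abs_of_pos hA₀, norm_neg, norm_one] at this
      have habsb : ‖b‖ = 1 := habsexp s
      have : ‖a + b‖ ≤ ‖a‖ + ‖b‖ := norm_add_le _ _
      rw [habsb] at this
      have hlt : ‖a + b‖ < 1 / A := by linarith
      rw [lt_div_iff₀ hA₀] at hlt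
      nlinarith
    have hab : a = b := by
      rcases mul_eq_zero.1 hfac with h | h
      · exact sub_eq_zero.1 h
      · exact absurd h hne
    rw [ha, hb, Complex.exp_eq_exp_iff_exists_int] at hab
    obtain ⟨n, hn⟩ := hab
    have ht : t = (s:ℂ) + n * (2 * π) := by
      have hI : Complex.I * t = Complex.I * ((s:ℂ) + n * (2 * π)) := by
        rw [hn]; ring
      exact mul_left_cancel₀ Complex.I_ne_zero hI
    have hre : t.re = s + n * (2 * π) := by
      rw [ht]; push_cast; simp
    have hn0 : n = 0 := by
      have hπ := Real.pi_pos
      have h1 : (-1 : ℝ) < n := by nlinarith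
      have h2 : (n : ℝ) < 1 := by nlinarith
      exact_mod_cast by
        have h1' : (-1 : ℤ) < n := by exact_mod_cast h1
        have h2' : n < 1 := by exact_mod_cast h2
        omega
    rw [ht, hn0]; push_cast; ring
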